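/- For a fixed odd integer k ≥ 5 and j ∈ ℤ with 0 < j ≤ (k-1)/2, and odd integers α₁,α₂,α₃ with |αᵢ| ≤ k-2, |αᵢ| ≠ k-2j, and α₁+α₂+α₃ ≡ 0 (mod k), the following quartic relation holds among theta constants: θ[(k-4j)/k;1]·∏ᵢθ[αᵢ/k;1] + e^{πi(k-4j)/k}·θ[(k-2j)/k;1]·∏ᵢθ[(αᵢ+2j)/k;1] + e^{πi(-k+2j)/k}·θ[(k-2j)/k;1]·∏ᵢθ[(αᵢ-2j)/k;1] = 0, where all theta constants are evaluated at (0, kz) for z in the upper half-plane. -/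

import Mathlib

open Complex

/-- Theta constant with characteristics `[ε; 1]` evaluated at `z = 0`:
`θ[ε;1](0,τ) = ∑_{n∈ℤ} exp(2πi·[½(n+ε/2)²τ + (n+ε/2)·(1/2)])`. -/
noncomputable def thetaChar (ε : ℝ) (τ : ℂ) : ℂ :=
  ∑' n : ℤ, Complex.exp (2 * Real.pi * Complex.I *
    ((1/2) * ((n : ℂ) + (ε : ℂ)/2)^2 * τ + ((n : ℂ) + (ε : ℂ)/2) * (1/2)))

noncomputable def FKht (k : ℤ) (z : ℂ) (b : ℤ) (n : ℤ) : ℂ :=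
  (-1)^n * Complex.exp ((Real.pi : ℂ) * Complex.I * z * (2*(k:ℂ)*(n:ℂ)+(b:ℂ))^2 / (4*(k:ℂ)))

noncomputable def FKHt (k : ℤ) (z : ℂ) (c : ℤ) (n : ℤ) : ℂ :=
  Complex.exp ((Real.pi : ℂ) * Complex.I * z * (2*(k:ℂ)*(n:ℂ)+(c:ℂ))^2 / (2*(k:ℂ)))

noncomputable def FKh (k : ℤ) (z : ℂ) (b : ℤ) : ℂ := ∑' n : ℤ, FKht k z b n
noncomputable def FKH (k : ℤ) (z : ℂ) (c : ℤ) : ℂ := ∑' n : ℤ, FKHt k z c n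

lemma summable_norm_master {w : ℂ} (hw : 0 < w.im) (r : ℝ) :
    Summable fun n : ℤ => ‖Complex.exp ((Real.pi : ℂ) * Complex.I * ((n:ℂ) + (r:ℂ))^2 * w)‖ := by
  have h1 : Summable fun n : ℤ => jacobiTheta₂_term n ((r:ℂ)*w) w :=
    (summable_jacobiTheta₂_term_iff _ _).mpr hw
  have h2 := h1.mul_left (Complex.exp ((Real.pi : ℂ) * Complex.I * (r:ℂ)^2 * w))
  have h3 : (fun n : ℤ => Complex.exp ((Real.pi : ℂ) * Complex.I * ((n:ℂ)+(r:ℂ))^2 * w))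
      = fun n : ℤ => Complex.exp ((Real.pi : ℂ) * Complex.I * (r:ℂ)^2 * w) *
        jacobiTheta₂_term n ((r:ℂ)*w) w := by
    funext n
    rw [jacobiTheta₂_term, ← Complex.exp_add]
    congr 1
    ring
  exact (summable_norm_iff.mpr h2).congr fun n => congrArg norm (congrFun h3 n).symm

variable {k : ℤ} {z : ℂ}

lemma summable_norm_FKHt (hk : 0 < k) (hz : 0 < z.im) (c : ℤ) :
    Summable fun n : ℤ => ‖FKHt k z c n‖ := by
  have hknz : (k:ℂ) ≠ 0 := by
    exact Int.cast_ne_zero.mpr hk.ne'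
  have hw : 0 < (2*(k:ℂ)*z).im := by
    have : (2*(k:ℂ)*z).im = 2*(k:ℝ)*z.im := by
      simp [Complex.mul_im]
    rw [this]
    have : (0:ℝ) < (k:ℝ) := by exact_mod_cast hk
    positivity
  refine (summable_norm_master hw ((c:ℝ)/(2*(k:ℝ)))).congr fun n => ?_
  congr 1
  unfold FKHt
  congr 1
  push_cast
  field_simp

lemma summable_norm_FKht (hk : 0 < k) (hz : 0 < z.im) (b : ℤ) :
    Summable fun n : ℤ => ‖FKht k z b n‖ := by
  have hknz : (k:ℂ) ≠ 0 := by
    exact Int.cast_ne_zero.mpr hk.ne'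
  have hw : 0 < ((k:ℂ)*z).im := by
    have : ((k:ℂ)*z).im = (k:ℝ)*z.im := by
      simp [Complex.mul_im]
    rw [this]
    have : (0:ℝ) < (k:ℝ) := by exact_mod_cast hk
    positivity
  refine (summable_norm_master hw ((b:ℝ)/(2*(k:ℝ)))).congr fun n => ?_
  unfold FKht
  rw [norm_mul]
  have h1 : ‖((-1 : ℂ))^n‖ = 1 := by
    rw [norm_zpow]
    simp
  rw [h1, one_mul]
  congr 1
  congr 1
  push_cast
  field_simp
  ring

def FKS : Set (ℤ × ℤ) := {p | Even (p.1 + p.2)}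

/-- rotation onto even-sum pairs -/
noncomputable def FKe1 : (ℤ × ℤ) ≃ FKS :=
  Equiv.ofBijective (fun q => ⟨(q.1 + q.2, q.1 - q.2), ⟨q.1, by ring⟩⟩) (by
    constructor
    · rintro ⟨a, b⟩ ⟨c, d⟩ h
      simp only [Subtype.ext_iff, Prod.mk.injEq] at h
      obtain ⟨h1, h2⟩ := h
      refine Prod.ext ?_ ?_ <;> omega
    · rintro ⟨⟨m, n⟩, ⟨t, ht⟩⟩
      refine ⟨(t, m - t), ?_⟩
      simp only [Subtype.ext_iff, Prod.mk.injEq]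
      constructor <;> omega)

noncomputable def FKe2 : (ℤ × ℤ) ≃ ↥(FKSᶜ) :=
  Equiv.ofBijective (fun q => ⟨(q.1 + q.2 + 1, q.1 - q.2), by
      intro h
      obtain ⟨t, ht⟩ := h
      omega⟩) (by
    constructor
    · rintro ⟨a, b⟩ ⟨c, d⟩ h
      simp only [Subtype.mk.injEq, Prod.mk.injEq] at h
      obtain ⟨h1, h2⟩ := h
      refine Prod.ext ?_ ?_ <;> omega
    · rintro ⟨⟨m, n⟩, hmn⟩
      have h2 : Odd (m + n) := by
        rcases Int.even_or_odd (m + n) with h | h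
        · exact absurd h hmn
        · exact h
      obtain ⟨t, ht⟩ := h2
      refine ⟨(t, m - t - 1), ?_⟩
      simp only [Subtype.mk.injEq, Prod.mk.injEq]
      constructor <;> omega)

lemma FK_neg_one_zpow_two_mul (t : ℤ) : ((-1 : ℂ))^(2*t) = 1 := by
  rw [zpow_mul]
  norm_num

lemma FK_pair (hk : 0 < k) (hz : 0 < z.im) (s d : ℤ) :
    FKh k z (s+d) * FKh k z (s-d) =
      FKH k z s * FKH k z d - FKH k z (s+k) * FKH k z (d+k) := by
  have hknz : (k:ℂ) ≠ 0 := by exact Int.cast_ne_zero.mpr hk.ne'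
  set F : ℤ × ℤ → ℂ := fun p => FKht k z (s+d) p.1 * FKht k z (s-d) p.2 with hF
  have hsumF : Summable F :=
    summable_mul_of_summable_norm (summable_norm_FKht hk hz _) (summable_norm_FKht hk hz _)
  have hLHS : FKh k z (s+d) * FKh k z (s-d) = ∑' p : ℤ × ℤ, F p :=
    tsum_mul_tsum_of_summable_norm (summable_norm_FKht hk hz _) (summable_norm_FKht hk hz _)
  have key1 : ∀ q : ℤ × ℤ, F (FKe1 q) = FKHt k z s q.1 * FKHt k z d q.2 := by
    rintro ⟨t, t'⟩
    show FKht k z (s+d) (t+t') * FKht k z (s-d) (t-t') = _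
    unfold FKht FKHt
    have hsgn : ((-1:ℂ))^(t+t') * ((-1:ℂ))^(t-t') = 1 := by
      rw [← zpow_add₀ (by norm_num : (-1:ℂ) ≠ 0)]
      have : t + t' + (t - t') = 2*t := by ring
      rw [this, FK_neg_one_zpow_two_mul]
    calc ((-1:ℂ))^(t+t') * Complex.exp ((Real.pi : ℂ) * I * z * (2*(k:ℂ)*((t+t':ℤ):ℂ)+((s+d:ℤ):ℂ))^2 / (4*(k:ℂ)))
          * (((-1:ℂ))^(t-t') * Complex.exp ((Real.pi : ℂ) * I * z * (2*(k:ℂ)*((t-t':ℤ):ℂ)+((s-d:ℤ):ℂ))^2 / (4*(k:ℂ))))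
        = (((-1:ℂ))^(t+t') * ((-1:ℂ))^(t-t')) *
          (Complex.exp ((Real.pi : ℂ) * I * z * (2*(k:ℂ)*((t+t':ℤ):ℂ)+((s+d:ℤ):ℂ))^2 / (4*(k:ℂ)))
           * Complex.exp ((Real.pi : ℂ) * I * z * (2*(k:ℂ)*((t-t':ℤ):ℂ)+((s-d:ℤ):ℂ))^2 / (4*(k:ℂ)))) := by ring
      _ = _ := by
          rw [hsgn, one_mul, ← Complex.exp_add, ← Complex.exp_add]
          congr 1
          push_cast
          field_simp
          ring
  have key2 : ∀ q : ℤ × ℤ, F (FKe2 q) = -(FKHt k z (s+k) q.1 * FKHt k z (d+k) q.2) := by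
    rintro ⟨t, t'⟩
    show FKht k z (s+d) (t+t'+1) * FKht k z (s-d) (t-t') = _
    unfold FKht FKHt
    have hsgn : ((-1:ℂ))^(t+t'+1) * ((-1:ℂ))^(t-t') = -1 := by
      rw [← zpow_add₀ (by norm_num : (-1:ℂ) ≠ 0)]
      have : t + t' + 1 + (t - t') = 2*t + 1 := by ring
      rw [this, zpow_add₀ (by norm_num : (-1:ℂ) ≠ 0), FK_neg_one_zpow_two_mul]
      norm_num
    calc ((-1:ℂ))^(t+t'+1) * Complex.exp ((Real.pi : ℂ) * I * z * (2*(k:ℂ)*((t+t'+1:ℤ):ℂ)+((s+d:ℤ):ℂ))^2 / (4*(k:ℂ)))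
          * (((-1:ℂ))^(t-t') * Complex.exp ((Real.pi : ℂ) * I * z * (2*(k:ℂ)*((t-t':ℤ):ℂ)+((s-d:ℤ):ℂ))^2 / (4*(k:ℂ))))
        = (((-1:ℂ))^(t+t'+1) * ((-1:ℂ))^(t-t')) *
          (Complex.exp ((Real.pi : ℂ) * I * z * (2*(k:ℂ)*((t+t'+1:ℤ):ℂ)+((s+d:ℤ):ℂ))^2 / (4*(k:ℂ)))
           * Complex.exp ((Real.pi : ℂ) * I * z * (2*(k:ℂ)*((t-t':ℤ):ℂ)+((s-d:ℤ):ℂ))^2 / (4*(k:ℂ)))) := by ring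
      _ = _ := by
          rw [hsgn, ← Complex.exp_add, ← Complex.exp_add]
          have harg : (Real.pi : ℂ) * I * z * (2*(k:ℂ)*((t+t'+1:ℤ):ℂ)+((s+d:ℤ):ℂ))^2 / (4*(k:ℂ))
              + (Real.pi : ℂ) * I * z * (2*(k:ℂ)*((t-t':ℤ):ℂ)+((s-d:ℤ):ℂ))^2 / (4*(k:ℂ))
              = (Real.pi : ℂ) * I * z * (2*(k:ℂ)*(t:ℂ)+((s+k:ℤ):ℂ))^2 / (2*(k:ℂ))
              + (Real.pi : ℂ) * I * z * (2*(k:ℂ)*(t':ℂ)+((d+k:ℤ):ℂ))^2 / (2*(k:ℂ)) := by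
            push_cast
            field_simp
            ring
          rw [harg, Complex.exp_add]
          ring
  have hpart1 : ∑' (x : FKS), F x = FKH k z s * FKH k z d := by
    rw [← FKe1.tsum_eq (fun x : FKS => F x)]
    rw [tsum_congr key1]
    exact (tsum_mul_tsum_of_summable_norm (summable_norm_FKHt hk hz _)
      (summable_norm_FKHt hk hz _)).symm
  have hpart2 : ∑' (x : ↥(FKSᶜ)), F x = -(FKH k z (s+k) * FKH k z (d+k)) := by
    rw [← FKe2.tsum_eq (fun x : ↥(FKSᶜ) => F x)]
    rw [tsum_congr key2, tsum_neg]
    rw [show FKH k z (s+k) * FKH k z (d+k)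
        = ∑' (b : ℤ × ℤ), FKHt k z (s+k) b.1 * FKHt k z (d+k) b.2 from
      tsum_mul_tsum_of_summable_norm (summable_norm_FKHt hk hz _)
        (summable_norm_FKHt hk hz _)]
  have hsplit := hsumF.tsum_subtype_add_tsum_subtype_compl FKS
  rw [hLHS, ← hsplit, hpart1, hpart2]
  ring

lemma FKH_shift (t c : ℤ) : FKH k z (c + 2*k*t) = FKH k z c := by
  unfold FKH
  rw [← (Equiv.addRight t).tsum_eq (FKHt k z c)]
  refine tsum_congr fun n => ?_
  unfold FKHt
  congr 1
  push_cast [Equiv.coe_addRight]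
  ring

lemma FKH_neg (c : ℤ) : FKH k z (-c) = FKH k z c := by
  unfold FKH
  rw [← (Equiv.neg ℤ).tsum_eq (FKHt k z c)]
  refine tsum_congr fun n => ?_
  unfold FKHt
  congr 1
  push_cast [Equiv.neg_apply]
  ring

lemma FK_theta_eq (hk : 0 < k) (β : ℤ) :
    thetaChar ((β : ℝ)/(k : ℝ)) ((k:ℂ)*z)
      = Complex.exp ((Real.pi:ℂ)*I*(β:ℂ)/(2*(k:ℂ))) * FKh k z β := by
  have hknz : (k:ℂ) ≠ 0 := by exact Int.cast_ne_zero.mpr hk.ne'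
  unfold thetaChar FKh
  rw [← tsum_mul_left]
  refine tsum_congr fun n => ?_
  unfold FKht
  have hm1 : ((-1:ℂ))^n = Complex.exp ((n:ℂ) * ((Real.pi:ℂ) * I)) := by
    rw [Complex.exp_int_mul, Complex.exp_pi_mul_I]
  rw [hm1, ← Complex.exp_add, ← Complex.exp_add]
  congr 1
  push_cast
  field_simp
  ring

lemma FKH_eq₁ (t c d : ℤ) (h : c = d + 2*k*t) : FKH k z c = FKH k z d := by
  rw [h, FKH_shift]

lemma FKH_eq₂ (t c d : ℤ) (h : c = -d + 2*k*t) : FKH k z c = FKH k z d := by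
  rw [h, FKH_shift, FKH_neg]

lemma FK_key (hk : 0 < k) (hz : 0 < z.im) (hkodd : Odd k) (j a0 a1 a2 : ℤ)
    (h0 : Odd a0) (h1 : Odd a1) (h2 : Odd a2)
    (hsum : k ∣ (a0 + a1 + a2)) :
    (FKh k z (k-4*j) * FKh k z a0) * (FKh k z a1 * FKh k z a2)
      = (FKh k z (k-2*j) * FKh k z (a0+2*j)) * (FKh k z (a1+2*j) * FKh k z (a2+2*j))
      + (FKh k z (k-2*j) * FKh k z (a0-2*j)) * (FKh k z (a1-2*j) * FKh k z (a2-2*j)) := by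
  obtain ⟨x, hkx⟩ := hkodd
  obtain ⟨y0, hy0⟩ := h0
  obtain ⟨y1, hy1⟩ := h1
  obtain ⟨y2, hy2⟩ := h2
  obtain ⟨c, hc⟩ := hsum
  have hoddsum : Odd (a0 + a1 + a2) := ⟨y0 + y1 + y2 + 1, by omega⟩
  rw [hc] at hoddsum
  obtain ⟨ℓ, hcl⟩ := (Int.odd_mul.mp hoddsum).2
  set u : ℤ := x + y0 + 1 with hudef
  set f : ℤ := k - u with hfdef
  set σ2 : ℤ := k*ℓ + f with hσ2
  set δ : ℤ := y1 - y2 with hδdef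
  have hu : 2*u = k + a0 := by omega
  have hS : 2*σ2 = a1 + a2 := by
    rw [hσ2, hfdef]
    linear_combination -hc - k*hcl - hu
  have hD : 2*δ = a1 - a2 := by omega
  have P1 := FK_pair hk hz (u - 2*j) (f - 2*j)
  rw [show u - 2*j + (f - 2*j) = k - 4*j from by omega,
      show u - 2*j - (f - 2*j) = a0 from by omega] at P1
  have P2 := FK_pair hk hz σ2 δ
  rw [show σ2 + δ = a1 from by omega,
      show σ2 - δ = a2 from by omega] at P2
  have P3 := FK_pair hk hz u (f - 2*j)
  rw [show u + (f - 2*j) = k - 2*j from by omega,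
      show u - (f - 2*j) = a0 + 2*j from by omega] at P3
  have P4 := FK_pair hk hz (σ2 + 2*j) δ
  rw [show σ2 + 2*j + δ = a1 + 2*j from by omega,
      show σ2 + 2*j - δ = a2 + 2*j from by omega] at P4
  have P5 := FK_pair hk hz (u - 2*j) f
  rw [show u - 2*j + f = k - 2*j from by omega,
      show u - 2*j - f = a0 - 2*j from by omega] at P5
  have P6 := FK_pair hk hz (σ2 - 2*j) δ
  rw [show σ2 - 2*j + δ = a1 - 2*j from by omega,
      show σ2 - 2*j - δ = a2 - 2*j from by omega] at P6
  rw [P1, P2, P3, P4, P5, P6]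
  have hc1 : FKH k z (f - 2*j) = FKH k z (u + 2*j + k) := FKH_eq₂ 1 _ _ (by omega)
  have hc2 : FKH k z (f - 2*j + k) = FKH k z (u + 2*j) := FKH_eq₂ 1 _ _ (by omega)
  have hc3 : FKH k z f = FKH k z (u + k) := FKH_eq₂ 1 _ _ (by omega)
  have hc4 : FKH k z (f + k) = FKH k z u := FKH_eq₂ 1 _ _ (by omega)
  rw [hc1, hc2, hc3, hc4]
  rcases Int.even_or_odd ℓ with ⟨t, ht⟩ | ⟨t, ht⟩
  · have hs1 : FKH k z σ2 = FKH k z (u + k) :=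
      FKH_eq₂ (t+1) _ _ (by linear_combination hσ2 + k*ht)
    have hs2 : FKH k z (σ2 + k) = FKH k z u :=
      FKH_eq₂ (t+1) _ _ (by linear_combination hσ2 + k*ht)
    have hs3 : FKH k z (σ2 + 2*j) = FKH k z (u - 2*j + k) :=
      FKH_eq₂ (t+1) _ _ (by linear_combination hσ2 + k*ht)
    have hs4 : FKH k z (σ2 + 2*j + k) = FKH k z (u - 2*j) :=
      FKH_eq₂ (t+1) _ _ (by linear_combination hσ2 + k*ht)
    have hs5 : FKH k z (σ2 - 2*j) = FKH k z (u + 2*j + k) :=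
      FKH_eq₂ (t+1) _ _ (by linear_combination hσ2 + k*ht)
    have hs6 : FKH k z (σ2 - 2*j + k) = FKH k z (u + 2*j) :=
      FKH_eq₂ (t+1) _ _ (by linear_combination hσ2 + k*ht)
    rw [hs1, hs2, hs3, hs4, hs5, hs6]
    ring
  · have hs1 : FKH k z σ2 = FKH k z u :=
      FKH_eq₂ (t+1) _ _ (by linear_combination hσ2 + k*ht)
    have hs2 : FKH k z (σ2 + k) = FKH k z (u + k) :=
      FKH_eq₂ (t+2) _ _ (by linear_combination hσ2 + k*ht)
    have hs3 : FKH k z (σ2 + 2*j) = FKH k z (u - 2*j) :=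
      FKH_eq₂ (t+1) _ _ (by linear_combination hσ2 + k*ht)
    have hs4 : FKH k z (σ2 + 2*j + k) = FKH k z (u - 2*j + k) :=
      FKH_eq₂ (t+2) _ _ (by linear_combination hσ2 + k*ht)
    have hs5 : FKH k z (σ2 - 2*j) = FKH k z (u + 2*j) :=
      FKH_eq₂ (t+1) _ _ (by linear_combination hσ2 + k*ht)
    have hs6 : FKH k z (σ2 - 2*j + k) = FKH k z (u + 2*j + k) :=
      FKH_eq₂ (t+2) _ _ (by linear_combination hσ2 + k*ht)
    rw [hs1, hs2, hs3, hs4, hs5, hs6]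
    ring

/-- Farkas–Kra quartic relation among theta constants (Proposition 7.3). -/
theorem quartic_theta_relation
    (k : ℤ) (hk_odd : Odd k) (hk : 5 ≤ k)
    (j : ℤ) (hj0 : 0 < j) (hj : 2 * j ≤ k - 1)
    (α : Fin 3 → ℤ)
    (hα_odd : ∀ i, Odd (α i))
    (hα_le : ∀ i, |α i| ≤ k - 2)
    (hα_ne : ∀ i, |α i| ≠ k - 2 * j)
    (hα_sum : (k : ℤ) ∣ (α 0 + α 1 + α 2))
    (z : ℂ) (hz : 0 < z.im) :
    thetaChar (((k - 4*j : ℤ) : ℝ) / (k : ℝ)) ((k : ℂ) * z) *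
        (∏ i : Fin 3, thetaChar (((α i : ℤ) : ℝ) / (k : ℝ)) ((k : ℂ) * z)) +
      Complex.exp (Real.pi * Complex.I * ((k - 4*j : ℤ) : ℂ) / (k : ℂ)) *
        thetaChar (((k - 2*j : ℤ) : ℝ) / (k : ℝ)) ((k : ℂ) * z) *
        (∏ i : Fin 3, thetaChar (((α i + 2*j : ℤ) : ℝ) / (k : ℝ)) ((k : ℂ) * z)) +
      Complex.exp (Real.pi * Complex.I * ((-k + 2*j : ℤ) : ℂ) / (k : ℂ)) *
        thetaChar (((k - 2*j : ℤ) : ℝ) / (k : ℝ)) ((k : ℂ) * z) *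
        (∏ i : Fin 3, thetaChar (((α i - 2*j : ℤ) : ℝ) / (k : ℝ)) ((k : ℂ) * z)) = 0 := by
  have hk0 : 0 < k := by omega
  have hknz : (k:ℂ) ≠ 0 := by exact Int.cast_ne_zero.mpr hk0.ne'
  rw [Fin.prod_univ_three, Fin.prod_univ_three, Fin.prod_univ_three]
  rw [FK_theta_eq hk0 (k - 4*j), FK_theta_eq hk0 (k - 2*j), FK_theta_eq hk0 (α 0),
    FK_theta_eq hk0 (α 1), FK_theta_eq hk0 (α 2), FK_theta_eq hk0 (α 0 + 2*j),
    FK_theta_eq hk0 (α 1 + 2*j), FK_theta_eq hk0 (α 2 + 2*j), FK_theta_eq hk0 (α 0 - 2*j),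
    FK_theta_eq hk0 (α 1 - 2*j), FK_theta_eq hk0 (α 2 - 2*j)]
  have keyh := FK_key hk0 hz hk_odd j (α 0) (α 1) (α 2) (hα_odd 0) (hα_odd 1) (hα_odd 2) hα_sum
  set Φ : ℂ := Complex.exp ((Real.pi:ℂ) * I *
    ((k:ℂ) - 4*(j:ℂ) + (α 0 : ℂ) + (α 1 : ℂ) + (α 2 : ℂ)) / (2*(k:ℂ))) with hΦ
  have hA : Complex.exp ((Real.pi:ℂ)*I*((k - 4*j : ℤ):ℂ)/(2*(k:ℂ)))
        * Complex.exp ((Real.pi:ℂ)*I*((α 0 : ℤ):ℂ)/(2*(k:ℂ)))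
        * Complex.exp ((Real.pi:ℂ)*I*((α 1 : ℤ):ℂ)/(2*(k:ℂ)))
        * Complex.exp ((Real.pi:ℂ)*I*((α 2 : ℤ):ℂ)/(2*(k:ℂ))) = Φ := by
    rw [hΦ, ← Complex.exp_add, ← Complex.exp_add, ← Complex.exp_add]
    congr 1
    push_cast
    field_simp
  have hB : Complex.exp ((Real.pi:ℂ) * Complex.I * ((k - 4*j : ℤ) : ℂ) / (k : ℂ))
        * Complex.exp ((Real.pi:ℂ)*I*((k - 2*j : ℤ):ℂ)/(2*(k:ℂ)))
        * Complex.exp ((Real.pi:ℂ)*I*((α 0 + 2*j : ℤ):ℂ)/(2*(k:ℂ)))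
        * Complex.exp ((Real.pi:ℂ)*I*((α 1 + 2*j : ℤ):ℂ)/(2*(k:ℂ)))
        * Complex.exp ((Real.pi:ℂ)*I*((α 2 + 2*j : ℤ):ℂ)/(2*(k:ℂ))) = -Φ := by
    rw [hΦ, ← Complex.exp_add, ← Complex.exp_add, ← Complex.exp_add, ← Complex.exp_add]
    have harg : (Real.pi:ℂ) * Complex.I * ((k - 4*j : ℤ) : ℂ) / (k : ℂ)
        + (Real.pi:ℂ)*I*((k - 2*j : ℤ):ℂ)/(2*(k:ℂ))
        + (Real.pi:ℂ)*I*((α 0 + 2*j : ℤ):ℂ)/(2*(k:ℂ))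
        + (Real.pi:ℂ)*I*((α 1 + 2*j : ℤ):ℂ)/(2*(k:ℂ))
        + (Real.pi:ℂ)*I*((α 2 + 2*j : ℤ):ℂ)/(2*(k:ℂ))
        = (Real.pi:ℂ) * I * ((k:ℂ) - 4*(j:ℂ) + (α 0 : ℂ) + (α 1 : ℂ) + (α 2 : ℂ)) / (2*(k:ℂ))
          + (Real.pi:ℂ) * I := by
      push_cast
      have h2 : (2*(k:ℂ)) ≠ 0 := by simpa using hknz
      rw [div_add_div _ _ hknz h2, div_add_div _ _ (mul_ne_zero hknz h2) h2,
        div_add_div _ _ (mul_ne_zero (mul_ne_zero hknz h2) h2) h2,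
        div_add_div _ _ (mul_ne_zero (mul_ne_zero (mul_ne_zero hknz h2) h2) h2) h2,
        div_add' _ _ _ h2,
        div_eq_div_iff (mul_ne_zero (mul_ne_zero (mul_ne_zero (mul_ne_zero hknz h2) h2) h2) h2) h2]
      ring
    rw [harg, Complex.exp_add, Complex.exp_pi_mul_I]
    ring
  have hC : Complex.exp ((Real.pi:ℂ) * Complex.I * ((-k + 2*j : ℤ) : ℂ) / (k : ℂ))
        * Complex.exp ((Real.pi:ℂ)*I*((k - 2*j : ℤ):ℂ)/(2*(k:ℂ)))
        * Complex.exp ((Real.pi:ℂ)*I*((α 0 - 2*j : ℤ):ℂ)/(2*(k:ℂ)))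
        * Complex.exp ((Real.pi:ℂ)*I*((α 1 - 2*j : ℤ):ℂ)/(2*(k:ℂ)))
        * Complex.exp ((Real.pi:ℂ)*I*((α 2 - 2*j : ℤ):ℂ)/(2*(k:ℂ))) = -Φ := by
    rw [hΦ, ← Complex.exp_add, ← Complex.exp_add, ← Complex.exp_add, ← Complex.exp_add]
    have harg : (Real.pi:ℂ) * Complex.I * ((-k + 2*j : ℤ) : ℂ) / (k : ℂ)
        + (Real.pi:ℂ)*I*((k - 2*j : ℤ):ℂ)/(2*(k:ℂ))
        + (Real.pi:ℂ)*I*((α 0 - 2*j : ℤ):ℂ)/(2*(k:ℂ))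
        + (Real.pi:ℂ)*I*((α 1 - 2*j : ℤ):ℂ)/(2*(k:ℂ))
        + (Real.pi:ℂ)*I*((α 2 - 2*j : ℤ):ℂ)/(2*(k:ℂ))
        = (Real.pi:ℂ) * I * ((k:ℂ) - 4*(j:ℂ) + (α 0 : ℂ) + (α 1 : ℂ) + (α 2 : ℂ)) / (2*(k:ℂ))
          + (-((Real.pi:ℂ) * I)) := by
      push_cast
      have h2 : (2*(k:ℂ)) ≠ 0 := by simpa using hknz
      rw [div_add_div _ _ hknz h2, div_add_div _ _ (mul_ne_zero hknz h2) h2,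
        div_add_div _ _ (mul_ne_zero (mul_ne_zero hknz h2) h2) h2,
        div_add_div _ _ (mul_ne_zero (mul_ne_zero (mul_ne_zero hknz h2) h2) h2) h2,
        div_add' _ _ _ h2,
        div_eq_div_iff (mul_ne_zero (mul_ne_zero (mul_ne_zero (mul_ne_zero hknz h2) h2) h2) h2) h2]
      ring
    have hneg : Complex.exp (-((Real.pi:ℂ) * I)) = -1 := by
      rw [Complex.exp_neg, Complex.exp_pi_mul_I]
      norm_num
    rw [harg, Complex.exp_add, hneg]
    ring
  linear_combination
    (FKh k z (k - 4*j) * FKh k z (α 0) * FKh k z (α 1) * FKh k z (α 2)) * hA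
    + (FKh k z (k - 2*j) * FKh k z (α 0 + 2*j) * FKh k z (α 1 + 2*j) * FKh k z (α 2 + 2*j)) * hB
    + (FKh k z (k - 2*j) * FKh k z (α 0 - 2*j) * FKh k z (α 1 - 2*j) * FKh k z (α 2 - 2*j)) * hC
    + Φ * keyh
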